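/- arXiv:math/0601107 — 3 statements merged into one kernel-verified Lean document; each statement's English description precedes it below -/
import Mathlib

section
/- Let Ω ⊆ ℂⁿ (n ≥ 2) be a Λ-nonisotropically balanced domain with Ω ≠ ℂⁿ, and let P_Λ : ℂⁿ → ℂⁿ be the map P_Λ(z_1,…,z_n) = (z_1^{λ_1}, …, z_n^{λ_n}). Then ω := P_Λ^{-1}(Ω) is a balanced domain in ℂⁿ (i.e., if z ∈ ω and |ζ| ≤ 1 then ζz ∈ ω), and the Minkowski functional M_ω(z) := inf{t > 0 : z/t ∈ ω} of ω satisfies M_ω(z) = h_{Λ,Ω}(P_Λ(z)) for all z ∈ ℂⁿ. -/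
open Set Metric

/-- `Ω` is `Λ`-nonisotropically balanced: `z ∈ Ω` and `|ζ| ≤ 1` imply
`(ζ^{λ₁} z₁, …, ζ^{λₙ} zₙ) ∈ Ω`. -/
def NonisotropicallyBalanced {n : ℕ} (Λ : Fin n → ℕ) (Ω : Set (Fin n → ℂ)) : Prop :=
  ∀ z ∈ Ω, ∀ ζ : ℂ, ‖ζ‖ ≤ 1 → (fun j : Fin n => ζ ^ Λ j * z j) ∈ Ω

/-- The Minkowski `Λ`-functional `h_{Λ,Ω}(z) = inf{t > 0 : (z₁/t^{λ₁},…,zₙ/t^{λₙ}) ∈ Ω}`. -/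
noncomputable def minkLam {n : ℕ} (Λ : Fin n → ℕ) (Ω : Set (Fin n → ℂ))
    (z : Fin n → ℂ) : ℝ :=
  sInf {t : ℝ | 0 < t ∧ (fun j : Fin n => z j / (t : ℂ) ^ Λ j) ∈ Ω}

/-- The proper map `P_Λ(z₁,…,zₙ) = (z₁^{λ₁},…,zₙ^{λₙ})`. -/
def PLam {n : ℕ} (Λ : Fin n → ℕ) (z : Fin n → ℂ) : Fin n → ℂ :=
  fun j => z j ^ Λ j

/-- The (classical, isotropic) Minkowski functional `M_G(z) = inf{t > 0 : z/t ∈ G}`. -/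
noncomputable def mink {n : ℕ} (G : Set (Fin n → ℂ)) (z : Fin n → ℂ) : ℝ :=
  sInf {t : ℝ | 0 < t ∧ (t : ℂ)⁻¹ • z ∈ G}

theorem preimage_PLam_balanced_domain_and_mink_eq (n : ℕ) (hn : 2 ≤ n)
    (Λ : Fin n → ℕ) (hΛ : ∀ j, 0 < Λ j)
    (Ω : Set (Fin n → ℂ)) (hopen : IsOpen Ω) (hconn : IsConnected Ω)
    (h0 : (0 : Fin n → ℂ) ∈ Ω) (hbal : NonisotropicallyBalanced Λ Ω)
    (hne : Ω ≠ Set.univ) :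
    (IsOpen (PLam Λ ⁻¹' Ω) ∧ IsConnected (PLam Λ ⁻¹' Ω) ∧
      ∀ z ∈ PLam Λ ⁻¹' Ω, ∀ ζ : ℂ, ‖ζ‖ ≤ 1 → ζ • z ∈ PLam Λ ⁻¹' Ω) ∧
    ∀ z : Fin n → ℂ, mink (PLam Λ ⁻¹' Ω) z = minkLam Λ Ω (PLam Λ z) := by
  have hcontP : Continuous (PLam Λ) :=
    continuous_pi fun j => (continuous_apply j).pow (Λ j)
  have h0' : (0 : Fin n → ℂ) ∈ PLam Λ ⁻¹' Ω := by
    have : PLam Λ 0 = 0 := by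
      funext j
      simp [PLam, zero_pow (hΛ j).ne']
    simpa [Set.mem_preimage, this] using h0
  have hbal' : ∀ z ∈ PLam Λ ⁻¹' Ω, ∀ ζ : ℂ, ‖ζ‖ ≤ 1 →
      ζ • z ∈ PLam Λ ⁻¹' Ω := by
    intro z hz ζ hζ
    have h1 := hbal _ hz ζ hζ
    have h2 : PLam Λ (ζ • z) = fun j => ζ ^ Λ j * PLam Λ z j := by
      funext j
      simp [PLam, mul_pow]
    simpa [Set.mem_preimage, h2] using h1
  have hpc : IsPathConnected (PLam Λ ⁻¹' Ω) := by
    refine ⟨0, h0', fun {z} hz => ?_⟩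
    refine ⟨⟨⟨fun t => ((t : ℝ) : ℂ) • z, by continuity⟩, by simp, by simp⟩,
      fun t => ?_⟩
    refine hbal' z hz _ ?_
    have := t.2
    simp only [Complex.norm_real, Real.norm_eq_abs, abs_of_nonneg t.2.1]
    exact t.2.2
  refine ⟨⟨hopen.preimage hcontP, hpc.isConnected, hbal'⟩, fun z => ?_⟩
  have hset : {t : ℝ | 0 < t ∧ (t : ℂ)⁻¹ • z ∈ PLam Λ ⁻¹' Ω} =
      {t : ℝ | 0 < t ∧ (fun j : Fin n => PLam Λ z j / (t : ℂ) ^ Λ j) ∈ Ω} := by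
    ext t
    simp only [Set.mem_setOf_eq, Set.mem_preimage, and_congr_right_iff]
    intro ht
    have : PLam Λ ((t : ℂ)⁻¹ • z) = fun j : Fin n => PLam Λ z j / (t : ℂ) ^ Λ j := by
      funext j
      simp [PLam, mul_pow, div_eq_mul_inv, inv_pow, mul_comm]
    rw [this]
  rw [mink, minkLam, hset]
end

section
/- Let ζ_1, ζ_2 ∈ D and s = (s_1,…,s_n) ∈ G_n. If there exists a holomorphic map f : D → G_n with f(ζ_1) = 0 and f(ζ_2) = s, then max{ inf{tⁿ : t > 0 and (1/t) sup_{|z|=1/t} |F_s(z)| < 1}, sup_{|z|=1} |F_s(z)| } ≤ |(ζ_2 − ζ_1)/(1 − conj(ζ_1) ζ_2)|. -/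
open Set Metric

/-- The symmetrized polydisc `Gₙ ⊂ ℂⁿ`: the set of `(s₁,…,sₙ)` such that all roots of
`zⁿ − s₁ z^{n−1} + s₂ z^{n−2} − … + (−1)ⁿ sₙ` lie in the open unit disc. -/
def symPolydisc (n : ℕ) : Set (Fin n → ℂ) :=
  {s | ∀ z : ℂ,
    z ^ n + ∑ j : Fin n, (-1 : ℂ) ^ ((j : ℕ) + 1) * s j * z ^ (n - ((j : ℕ) + 1)) = 0 →
      ‖z‖ < 1}

/-- Numerator of Costara's rational function `F_s`:
`(−1)ⁿ n sₙ z^{n−1} + … + (−s₁) = ∑_{j=1}^{n} (−1)^j j s_j z^{j−1}`. -/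
noncomputable def Fnum {n : ℕ} (s : Fin n → ℂ) (z : ℂ) : ℂ :=
  ∑ j : Fin n, (-1 : ℂ) ^ ((j : ℕ) + 1) * (((j : ℕ) : ℂ) + 1) * s j * z ^ (j : ℕ)

/-- Denominator of Costara's rational function `F_s`:
`n − (n−1) s₁ z + … + (−1)^{n−1} s_{n−1} z^{n−1} = ∑_{j=0}^{n} (−1)^j (n−j) s_j z^j`
(with `s₀ = 1`). -/
noncomputable def Fden {n : ℕ} (s : Fin n → ℂ) (z : ℂ) : ℂ :=
  (n : ℂ) + ∑ j : Fin n,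
    (-1 : ℂ) ^ ((j : ℕ) + 1) * ((n : ℂ) - (((j : ℕ) : ℂ) + 1)) * s j * z ^ ((j : ℕ) + 1)

/-- Costara's rational function `F_s`. -/
noncomputable def Frat {n : ℕ} (s : Fin n → ℂ) (z : ℂ) : ℂ :=
  Fnum s z / Fden s z

/-! ### Auxiliary definitions -/

/-- The monic polynomial (as a function) attached to `σ`. -/
noncomputable def Pval {n : ℕ} (σ : Fin n → ℂ) (z : ℂ) : ℂ :=
  z ^ n + ∑ j : Fin n, (-1:ℂ)^((j:ℕ)+1) * σ j * z ^ (n - ((j:ℕ)+1))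

/-- The reversed polynomial (as a function) attached to `σ`. -/
noncomputable def Qval {n : ℕ} (σ : Fin n → ℂ) (y : ℂ) : ℂ :=
  1 + ∑ j : Fin n, (-1:ℂ)^((j:ℕ)+1) * σ j * y ^ ((j:ℕ)+1)

/-! ### Elementary complex inequalities -/

lemma normSq_blaschke (a w : ℂ) :
    Complex.normSq (1 - a * (starRingEnd ℂ) w) - Complex.normSq (w - a)
      = (1 - Complex.normSq a) * (1 - Complex.normSq w) := by
  simp only [Complex.normSq_apply, Complex.sub_re, Complex.sub_im, Complex.mul_re, Complex.mul_im,
    Complex.one_re, Complex.one_im, Complex.conj_re, Complex.conj_im]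
  ring

lemma blaschke_lt {a w : ℂ} (ha : ‖a‖ < 1) (hw : ‖w‖ < 1) :
    ‖w - a‖ < ‖1 - a * (starRingEnd ℂ) w‖ := by
  have h1 : Complex.normSq a < 1 := by rw [← Complex.sq_norm]; nlinarith [norm_nonneg a]
  have h2 : Complex.normSq w < 1 := by rw [← Complex.sq_norm]; nlinarith [norm_nonneg w]
  have h := normSq_blaschke a w
  have h3 : Complex.normSq (w - a) < Complex.normSq (1 - a * (starRingEnd ℂ) w) := by nlinarith
  have := Real.sqrt_lt_sqrt (Complex.normSq_nonneg _) h3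
  simpa [Complex.norm_def] using this

lemma blaschke_lt' {a w : ℂ} (ha : ‖a‖ < 1) (hw : ‖w‖ < 1) :
    ‖w - a‖ < ‖1 - (starRingEnd ℂ) a * w‖ := by
  have := blaschke_lt ha hw
  have heq : ‖1 - a * (starRingEnd ℂ) w‖
      = ‖1 - (starRingEnd ℂ) a * w‖ := by
    rw [← Complex.norm_conj (1 - a * (starRingEnd ℂ) w)]
    congr 1
    simp [map_sub, map_mul]
  rwa [heq] at this

lemma aux_halfplane {w : ℂ} (h : Complex.normSq w < 1) :
    Complex.normSq (1 - w) < 2 * (1 - w).re := by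
  simp only [Complex.normSq_apply, Complex.sub_re, Complex.sub_im, Complex.one_re,
    Complex.one_im] at *
  nlinarith

lemma normSq_sub' (A B : ℂ) : Complex.normSq (A - B)
    = Complex.normSq A - 2 * (A * (starRingEnd ℂ) B).re + Complex.normSq B := by
  simp only [Complex.normSq_apply, Complex.mul_re, Complex.sub_re, Complex.sub_im,
    Complex.conj_re, Complex.conj_im]
  ring

lemma abs_lt_abs_of_normSq_lt {A B : ℂ} (h : Complex.normSq A < Complex.normSq B) :
    ‖A‖ < ‖B‖ := by
  have := Real.sqrt_lt_sqrt (Complex.normSq_nonneg _) h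
  simpa [Complex.norm_def] using this

/-! ### Root factorization -/

open Polynomial in
lemma exists_roots {n : ℕ} (σ : Fin n → ℂ) (hσ : σ ∈ symPolydisc n) :
    ∃ lam : Fin n → ℂ, (∀ i, ‖lam i‖ < 1) ∧
      ∀ z : ℂ, Pval σ z = ∏ i, (z - lam i) := by
  set p : ℂ[X] := X ^ n + ∑ j : Fin n, C ((-1:ℂ)^((j:ℕ)+1) * σ j) * X ^ (n - ((j:ℕ)+1)) with hp
  have heval : ∀ z : ℂ, p.eval z = Pval σ z := by
    intro z
    simp [hp, Pval, eval_finset_sum, mul_assoc]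
  have hdeg_sum : (∑ j : Fin n, C ((-1:ℂ)^((j:ℕ)+1) * σ j) * X ^ (n - ((j:ℕ)+1))).degree
      < (X ^ n : ℂ[X]).degree := by
    rw [degree_X_pow]
    refine lt_of_le_of_lt (degree_sum_le _ _) ?_
    rw [Finset.sup_lt_iff (by exact_mod_cast WithBot.bot_lt_coe n)]
    intro j _
    refine lt_of_le_of_lt (degree_C_mul_X_pow_le _ _) ?_
    exact_mod_cast Nat.sub_lt_of_pos_le (Nat.succ_pos _) j.2
  have hmonic : p.Monic := (monic_X_pow n).add_of_left hdeg_sum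
  have hdeg : p.degree = n := by
    rw [hp, degree_add_eq_left_of_degree_lt hdeg_sum, degree_X_pow]
  have hnd : p.natDegree = n := natDegree_eq_of_degree_eq_some hdeg
  have hsplits : Splits p := IsAlgClosed.splits p
  have hcard : p.roots.card = n := by
    rw [(splits_iff_card_roots).mp hsplits, hnd]
  have hfac : p = (p.roots.map fun a => X - C a).prod :=
    hsplits.eq_prod_roots_of_monic hmonic
  have hroots_lt : ∀ r ∈ p.roots, ‖r‖ < 1 := by
    intro r hr
    have hr0 : p.eval r = 0 := (mem_roots (hmonic.ne_zero)).mp hr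
    exact hσ r (by rw [show (r:ℂ)^n + ∑ j : Fin n, (-1:ℂ)^((j:ℕ)+1) * σ j * r ^ (n - ((j:ℕ)+1))
      = Pval σ r from rfl, ← heval r]; exact hr0)
  set l : List ℂ := p.roots.toList with hl
  have hlen : l.length = n := by rw [hl, Multiset.length_toList, hcard]
  have hcoe : (l : Multiset ℂ) = p.roots := Multiset.coe_toList _
  refine ⟨fun i => l.get (Fin.cast hlen.symm i), ?_, ?_⟩
  · intro i
    apply hroots_lt
    rw [← hcoe]
    exact Multiset.mem_coe.mpr (l.get_mem _)
  · intro z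
    rw [← heval z]
    conv_lhs => rw [hfac]
    rw [eval_multiset_prod, Multiset.map_map, ← hcoe, Multiset.map_coe, Multiset.prod_coe]
    conv_lhs => rw [← List.ofFn_get l]
    rw [List.map_ofFn, List.prod_ofFn]
    simp only [Function.comp, eval_sub, eval_X, eval_C]
    exact Fin.prod_congr' (fun i : Fin n => z - l.get (Fin.cast hlen.symm i)) hlen

lemma q_prod {n : ℕ} {σ : Fin n → ℂ} {lam : Fin n → ℂ}
    (hP : ∀ z : ℂ, Pval σ z = ∏ i, (z - lam i)) :
    ∀ y : ℂ, Qval σ y = ∏ i, (1 - lam i * y) := by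
  intro y
  rcases eq_or_ne y 0 with rfl | hy
  · simp [Qval]
  · have h1 : ∀ i : Fin n, 1 - lam i * y = y * (y⁻¹ - lam i) := by
      intro i; field_simp
    rw [Finset.prod_congr rfl (fun i _ => h1 i), Finset.prod_mul_distrib,
      Finset.prod_const, Finset.card_univ, Fintype.card_fin, ← hP y⁻¹, Pval, Qval,
      mul_add, Finset.mul_sum]
    have h2 : y ^ n * (y⁻¹) ^ n = 1 := by
      rw [← mul_pow, mul_inv_cancel₀ hy, one_pow]
    rw [h2]
    congr 1
    apply Finset.sum_congr rfl
    intro j _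
    have hj : (j:ℕ) + 1 ≤ n := j.2
    have h3 : y ^ n = y ^ (n - ((j:ℕ)+1)) * y ^ ((j:ℕ)+1) := by
      rw [← pow_add, Nat.sub_add_cancel hj]
    have h4 : (y⁻¹ : ℂ) ^ (n - ((j:ℕ)+1)) = (y ^ (n - ((j:ℕ)+1)))⁻¹ := by
      rw [inv_pow]
    have h5 : y ^ (n - ((j:ℕ)+1)) ≠ 0 := pow_ne_zero _ hy
    rw [h4, h3]; field_simp

/-! ### Fnum and Fden in terms of the roots -/

lemma fnum_eq {n : ℕ} {σ lam : Fin n → ℂ}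
    (hq : ∀ y : ℂ, Qval σ y = ∏ i, (1 - lam i * y)) (z : ℂ) :
    Fnum σ z
      = ∑ i : Fin n, (∏ k ∈ Finset.univ.erase i, (1 - lam k * z)) * (-(lam i)) := by
  have h1 : HasDerivAt (fun y : ℂ => Qval σ y) (Fnum σ z) z := by
    have : HasDerivAt (fun y : ℂ => ∑ j : Fin n, (-1:ℂ)^((j:ℕ)+1) * σ j * y ^ ((j:ℕ)+1))
        (∑ j : Fin n, (-1:ℂ)^((j:ℕ)+1) * σ j * ((((j:ℕ)+1 : ℕ) : ℂ) * z ^ (j:ℕ))) z := by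
      apply HasDerivAt.fun_sum
      intro j _
      have := (hasDerivAt_pow ((j:ℕ)+1) z).const_mul ((-1:ℂ)^((j:ℕ)+1) * σ j)
      simpa using this
    have h2 : HasDerivAt (fun y : ℂ => Qval σ y) _ z := this.const_add 1
    convert h2 using 1
    rw [Fnum]
    apply Finset.sum_congr rfl
    intro j _
    push_cast
    ring
  have h2 : HasDerivAt (fun y : ℂ => ∏ i : Fin n, (1 - lam i * y))
      (∑ i : Fin n, (∏ k ∈ Finset.univ.erase i, (1 - lam k * z)) * (-(lam i))) z := by
    have := HasDerivAt.fun_finsetProd (u := Finset.univ)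
      (f := fun (i : Fin n) (y : ℂ) => 1 - lam i * y) (f' := fun i => -(lam i)) (x := z)
      (fun i _ => by
        have : HasDerivAt (fun y : ℂ => lam i * y) (lam i) z := by
          simpa using (hasDerivAt_id z).const_mul (lam i)
        simpa using this.const_sub 1)
    simpa [smul_eq_mul] using this
  have heq : (fun y : ℂ => Qval σ y) = fun y : ℂ => ∏ i : Fin n, (1 - lam i * y) := funext hq
  rw [heq] at h1
  exact h1.unique h2

lemma fden_alg {n : ℕ} (σ : Fin n → ℂ) (z : ℂ) :
    Fden σ z = (n : ℂ) * Qval σ z - z * Fnum σ z := by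
  rw [Fden, Fnum, Qval, mul_add, mul_one, Finset.mul_sum, Finset.mul_sum,
    add_sub_assoc, ← Finset.sum_sub_distrib]
  congr 1
  apply Finset.sum_congr rfl
  intro j _
  push_cast
  ring

lemma sum_erase_identity {n : ℕ} (lam : Fin n → ℂ) (z : ℂ) :
    (n:ℂ) * ∏ i, (1 - lam i * z)
      - z * ∑ i : Fin n, (∏ k ∈ Finset.univ.erase i, (1 - lam k * z)) * (-(lam i))
    = ∑ i : Fin n, ∏ k ∈ Finset.univ.erase i, (1 - lam k * z) := by
  have hnQ : (n : ℂ) * ∏ i, (1 - lam i * z) = ∑ _i : Fin n, ∏ i, (1 - lam i * z) := by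
    rw [Finset.sum_const, Finset.card_univ, Fintype.card_fin, nsmul_eq_mul]
  rw [Finset.mul_sum, hnQ, ← Finset.sum_sub_distrib]
  apply Finset.sum_congr rfl
  intro i _
  rw [← Finset.prod_erase_mul Finset.univ _ (Finset.mem_univ i)]
  ring

lemma fden_eq {n : ℕ} {σ lam : Fin n → ℂ}
    (hq : ∀ y : ℂ, Qval σ y = ∏ i, (1 - lam i * y)) (z : ℂ) :
    Fden σ z = ∑ i : Fin n, ∏ k ∈ Finset.univ.erase i, (1 - lam k * z) := by
  rw [fden_alg, hq z, fnum_eq hq z, sum_erase_identity]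

/-! ### The Costara inequality -/

lemma costara_core {n : ℕ} (hn : 0 < n) {lam : Fin n → ℂ}
    (hlam : ∀ i, ‖lam i‖ < 1) {z : ℂ} (hz : ‖z‖ = 1) :
    (∑ i : Fin n, ∏ k ∈ Finset.univ.erase i, (1 - lam k * z)) ≠ 0 ∧
    ‖∑ i : Fin n, (∏ k ∈ Finset.univ.erase i, (1 - lam k * z)) * (-(lam i))‖
      < ‖∑ i : Fin n, ∏ k ∈ Finset.univ.erase i, (1 - lam k * z)‖ := by
  set u : Fin n → ℂ := fun i => 1 - lam i * z with hu
  set P : Fin n → ℂ := fun i => ∏ k ∈ Finset.univ.erase i, u k with hP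
  set D := ∑ i : Fin n, P i with hD
  set N := ∑ i : Fin n, P i * (-(lam i)) with hN
  set Q := ∏ i : Fin n, u i with hQ
  have habsw : ∀ i, ‖lam i * z‖ < 1 := fun i => by
    rw [norm_mul, hz, mul_one]; exact hlam i
  have hnsw : ∀ i, Complex.normSq (lam i * z) < 1 := fun i => by
    rw [← Complex.sq_norm]
    nlinarith [habsw i, norm_nonneg (lam i * z)]
  have hune : ∀ i, u i ≠ 0 := by
    intro i h
    have h1 : (1:ℂ) = lam i * z := sub_eq_zero.mp h
    have := habsw i
    rw [← h1] at this
    simp at this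
  have hPne : ∀ i, P i ≠ 0 := fun i => Finset.prod_ne_zero_iff.mpr (fun k _ => hune k)
  have hQP : ∀ i, Q = P i * u i := fun i =>
    (Finset.prod_erase_mul Finset.univ u (Finset.mem_univ i)).symm
  have hterm : ∀ i, Complex.normSq (u i) < 2 * (u i).re := fun i => aux_halfplane (hnsw i)
  have hure : ∀ i, 0 < (u i).re := by
    intro i
    have h1 : 0 < Complex.normSq (u i) := Complex.normSq_pos.mpr (hune i)
    nlinarith [hterm i]
  have hre : (Q * (starRingEnd ℂ) D).re = ∑ i : Fin n, (u i).re * Complex.normSq (P i) := by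
    rw [hD, map_sum, Finset.mul_sum, Complex.re_sum]
    apply Finset.sum_congr rfl
    intro i _
    rw [hQP i, mul_comm (P i) (u i), mul_assoc, Complex.mul_conj]
    simp [Complex.mul_re]
  have hrepos : 0 < (Q * (starRingEnd ℂ) D).re := by
    rw [hre]
    apply Finset.sum_pos
    · intro i _
      exact mul_pos (hure i) (Complex.normSq_pos.mpr (hPne i))
    · exact Finset.univ_nonempty_iff.mpr ⟨⟨0, hn⟩⟩
  have hDne : D ≠ 0 := by
    intro h
    rw [h] at hrepos
    simp at hrepos
  have hmain : Complex.normSq ((n : ℂ) * Q - D) < Complex.normSq D := by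
    rw [normSq_sub']
    have h1 : Complex.normSq ((n:ℂ) * Q) = (n:ℝ)^2 * Complex.normSq Q := by
      rw [map_mul]
      congr 1
      rw [Complex.normSq_natCast]
      ring
    have h2 : ((n:ℂ) * Q * (starRingEnd ℂ) D).re = (n:ℝ) * (Q * (starRingEnd ℂ) D).re := by
      rw [mul_assoc]
      simp [Complex.mul_re]
    rw [h1, h2]
    have key : (n:ℝ) * Complex.normSq Q < 2 * (Q * (starRingEnd ℂ) D).re := by
      rw [hre, Finset.mul_sum]
      have hsum : (n:ℝ) * Complex.normSq Q = ∑ _i : Fin n, Complex.normSq Q := by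
        rw [Finset.sum_const, Finset.card_univ, Fintype.card_fin, nsmul_eq_mul]
      rw [hsum]
      apply Finset.sum_lt_sum_of_nonempty (Finset.univ_nonempty_iff.mpr ⟨⟨0, hn⟩⟩)
      intro i _
      rw [hQP i, map_mul]
      calc Complex.normSq (P i) * Complex.normSq (u i)
          < Complex.normSq (P i) * (2 * (u i).re) := by
            apply mul_lt_mul_of_pos_left (hterm i) (Complex.normSq_pos.mpr (hPne i))
        _ = 2 * ((u i).re * Complex.normSq (P i)) := by ring
    have hnpos : (0:ℝ) < n := Nat.cast_pos.mpr hn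
    nlinarith [key, hnpos]
  have hzN : z * N = (n : ℂ) * Q - D := by
    have hnQ : (n : ℂ) * Q = ∑ _i : Fin n, Q := by
      rw [Finset.sum_const, Finset.card_univ, Fintype.card_fin, nsmul_eq_mul]
    rw [hN, hD, Finset.mul_sum, hnQ, ← Finset.sum_sub_distrib]
    apply Finset.sum_congr rfl
    intro i _
    rw [hQP i]
    simp only [hu]
    ring
  have hNS : Complex.normSq N < Complex.normSq D := by
    have hzz : Complex.normSq (z * N) = Complex.normSq N := by
      rw [map_mul]
      have : Complex.normSq z = 1 := by rw [← Complex.sq_norm, hz]; norm_num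
      rw [this, one_mul]
    rw [← hzz, hzN]
    exact hmain
  exact ⟨hDne, abs_lt_abs_of_normSq_lt hNS⟩

lemma costara {n : ℕ} (hn : 0 < n) {lam σ : Fin n → ℂ}
    (hlam : ∀ i, ‖lam i‖ < 1)
    (hq : ∀ y : ℂ, Qval σ y = ∏ i, (1 - lam i * y))
    {z : ℂ} (hz : ‖z‖ = 1) :
    Fden σ z ≠ 0 ∧ ‖Frat σ z‖ < 1 := by
  obtain ⟨hDne, hlt⟩ := costara_core hn hlam hz
  rw [← fden_eq hq z] at hDne
  have hlt' : ‖Fnum σ z‖ < ‖Fden σ z‖ := by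
    rw [fnum_eq hq z, fden_eq hq z]
    exact hlt
  refine ⟨hDne, ?_⟩
  rw [Frat, norm_div, div_lt_one (norm_pos_iff.mpr hDne)]
  exact hlt'

/-! ### Schwarz–Pick -/

lemma schwarz_pick {h : ℂ → ℂ} (hd : DifferentiableOn ℂ h (ball 0 1))
    (hm : MapsTo h (ball 0 1) (ball 0 1)) {a b : ℂ}
    (ha : ‖a‖ < 1) (hb : ‖b‖ < 1) (hz : h a = 0) :
    ‖h b‖ ≤ ‖(b - a) / (1 - (starRingEnd ℂ) a * b)‖ := by
  have hmem : ∀ {w : ℂ}, ‖w‖ < 1 → w ∈ ball (0:ℂ) 1 := by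
    intro w hw; simpa [mem_ball, dist_eq_norm] using hw
  have habs : ∀ {w : ℂ}, w ∈ ball (0:ℂ) 1 → ‖w‖ < 1 := by
    intro w hw; simpa [mem_ball, dist_eq_norm] using hw
  set c := (b - a) / (1 - (starRingEnd ℂ) a * b) with hc
  have h1ab : (1 - (starRingEnd ℂ) a * b) ≠ 0 := by
    intro hh
    have h1 : (1:ℂ) = (starRingEnd ℂ) a * b := sub_eq_zero.mp hh
    have h2 : ‖(starRingEnd ℂ) a * b‖ < 1 := by
      rw [norm_mul, Complex.norm_conj]
      nlinarith [norm_nonneg a, norm_nonneg b]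
    rw [← h1] at h2; simp at h2
  have hcabs : ‖c‖ < 1 := by
    rw [hc, norm_div, div_lt_one (norm_pos_iff.mpr h1ab)]
    exact blaschke_lt' ha hb
  set φ : ℂ → ℂ := fun μ => (μ + a) / (1 + (starRingEnd ℂ) a * μ) with hφ
  have hden : ∀ {μ : ℂ}, ‖μ‖ < 1 → (1 + (starRingEnd ℂ) a * μ) ≠ 0 := by
    intro μ hμ hh
    have h2 : ‖(starRingEnd ℂ) a * μ‖ < 1 := by
      rw [norm_mul, Complex.norm_conj]
      nlinarith [norm_nonneg a, norm_nonneg μ]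
    have h3 : (starRingEnd ℂ) a * μ = -1 := by linear_combination hh
    rw [h3] at h2; simp at h2
  have hφd : DifferentiableOn ℂ φ (ball 0 1) := by
    apply DifferentiableOn.div
    · exact (differentiable_id.add_const a).differentiableOn
    · exact ((differentiable_const (1:ℂ)).add
        ((differentiable_const ((starRingEnd ℂ) a)).mul differentiable_id)).differentiableOn
    · intro μ hμ; exact hden (habs hμ)
  have hφm : MapsTo φ (ball 0 1) (ball 0 1) := by
    intro μ hμ
    apply hmem
    rw [hφ]
    simp only []
    rw [norm_div, div_lt_one (norm_pos_iff.mpr (hden (habs hμ)))]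
    have h2 : ‖μ - (-a)‖ < ‖1 - (-a) * (starRingEnd ℂ) μ‖ :=
      blaschke_lt (by simpa using ha) (habs hμ)
    have h3 : ‖1 - (-a) * (starRingEnd ℂ) μ‖
        = ‖1 + (starRingEnd ℂ) a * μ‖ := by
      rw [← Complex.norm_conj (1 - (-a) * (starRingEnd ℂ) μ)]
      congr 1
      simp [map_sub, map_mul, map_neg]
    rw [h3] at h2
    simpa [sub_neg_eq_add] using h2
  have hG0 : (h ∘ φ) 0 = 0 := by
    have hφ0 : φ 0 = a := by rw [hφ]; simp
    simp [hφ0, hz]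
  have hGd : DifferentiableOn ℂ (h ∘ φ) (ball 0 1) := hd.comp hφd hφm
  have hGm : MapsTo (h ∘ φ) (ball 0 1) (ball 0 1) := hm.comp hφm
  have hSch := Complex.norm_le_norm_of_mapsTo_ball hGd (hGm.mono_right ball_subset_closedBall) hG0 hcabs
  have hφc : φ c = b := by
    rw [hφ]
    simp only []
    rw [div_eq_iff (hden hcabs), hc]
    have h1ab' : 1 - b * (starRingEnd ℂ) a ≠ 0 := by rwa [mul_comm]
    field_simp
    ring
  rw [Function.comp_apply, hφc] at hSch
  exact hSch

/-! ### Scaling identities -/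

lemma fnum_scale {n : ℕ} (s : Fin n → ℂ) {t : ℂ} (ht : t ≠ 0) (z : ℂ) :
    Fnum (fun j => s j / t ^ ((j:ℕ)+1)) z = t⁻¹ * Fnum s (z * t⁻¹) := by
  rw [Fnum, Fnum, Finset.mul_sum]
  apply Finset.sum_congr rfl
  intro j _
  rw [mul_pow, div_eq_mul_inv, ← inv_pow, pow_succ]
  ring

lemma fden_scale {n : ℕ} (s : Fin n → ℂ) {t : ℂ} (ht : t ≠ 0) (z : ℂ) :
    Fden (fun j => s j / t ^ ((j:ℕ)+1)) z = Fden s (z * t⁻¹) := by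
  rw [Fden, Fden]
  congr 1
  apply Finset.sum_congr rfl
  intro j _
  rw [mul_pow, div_eq_mul_inv, ← inv_pow, pow_succ]
  ring

lemma frat_scale {n : ℕ} (s : Fin n → ℂ) {t : ℂ} (ht : t ≠ 0) (z : ℂ) :
    Frat (fun j => s j / t ^ ((j:ℕ)+1)) z = t⁻¹ * Frat s (z * t⁻¹) := by
  rw [Frat, Frat, fnum_scale s ht z, fden_scale s ht z, mul_div_assoc]

lemma prod_abs_lt {n : ℕ} (hn : 0 < n) {a b : Fin n → ℝ} (h0 : ∀ i, 0 ≤ a i)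
    (hlt : ∀ i, a i < b i) : ∏ i, a i < ∏ i, b i := by
  have hbpos : ∀ i, 0 < b i := fun i => lt_of_le_of_lt (h0 i) (hlt i)
  by_cases hz : ∃ i, a i = 0
  · obtain ⟨i, hi⟩ := hz
    rw [Finset.prod_eq_zero (Finset.mem_univ i) hi]
    exact Finset.prod_pos (fun i _ => hbpos i)
  · push_neg at hz
    have hapos : ∀ i, 0 < a i := fun i => lt_of_le_of_ne (h0 i) (Ne.symm (hz i))
    apply Finset.prod_lt_prod_of_nonempty (fun i _ => hapos i) (fun i _ => hlt i)
    exact Finset.univ_nonempty_iff.mpr ⟨⟨0, hn⟩⟩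
theorem two_point_interpolation_necessary (n : ℕ) (hn : 2 ≤ n)
    (ζ₁ ζ₂ : ℂ) (hζ₁ : ‖ζ₁‖ < 1) (hζ₂ : ‖ζ₂‖ < 1)
    (s : Fin n → ℂ) (hs : s ∈ symPolydisc n)
    (f : ℂ → (Fin n → ℂ)) (hf : DifferentiableOn ℂ f (Metric.ball 0 1))
    (hmaps : Set.MapsTo f (Metric.ball 0 1) (symPolydisc n))
    (hf1 : f ζ₁ = 0) (hf2 : f ζ₂ = s) :
    max
      (sInf {x : ℝ | ∃ t : ℝ, 0 < t ∧
        (1 / t) * sSup ((fun z : ℂ => ‖Frat s z‖) '' Metric.sphere (0 : ℂ) (1 / t))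
          < 1 ∧ x = t ^ n})
      (sSup ((fun z : ℂ => ‖Frat s z‖) '' Metric.sphere (0 : ℂ) 1))
      ≤ ‖(ζ₂ - ζ₁) / (1 - (starRingEnd ℂ) ζ₁ * ζ₂)‖ := by
  have hn0 : 0 < n := lt_of_lt_of_le two_pos hn
  set m := ‖(ζ₂ - ζ₁) / (1 - (starRingEnd ℂ) ζ₁ * ζ₂)‖ with hm
  have hm0 : 0 ≤ m := norm_nonneg _
  have hfj : ∀ j : Fin n, DifferentiableOn ℂ (fun μ => f μ j) (ball 0 1) := fun j =>
    (ContinuousLinearMap.proj j : (Fin n → ℂ) →L[ℂ] ℂ).differentiable.comp_differentiableOn hf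
  -- PART 2 : the sup over the unit circle
  have part2 : sSup ((fun z : ℂ => ‖Frat s z‖) '' Metric.sphere (0:ℂ) 1) ≤ m := by
    apply Real.sSup_le _ hm0
    rintro x ⟨ω, hω, rfl⟩
    have habsω : ‖ω‖ = 1 := by
      simpa using mem_sphere_zero_iff_norm.mp hω
    have hFnumD : DifferentiableOn ℂ (fun μ => Fnum (f μ) ω) (ball 0 1) := by
      simp only [Fnum]
      apply DifferentiableOn.fun_sum
      intro j _
      exact ((hfj j).const_mul _).mul_const _
    have hFdenD : DifferentiableOn ℂ (fun μ => Fden (f μ) ω) (ball 0 1) := by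
      simp only [Fden]
      apply DifferentiableOn.add (differentiableOn_const _)
      apply DifferentiableOn.fun_sum
      intro j _
      exact ((hfj j).const_mul _).mul_const _
    have hdenne : ∀ μ ∈ ball (0:ℂ) 1, Fden (f μ) ω ≠ 0 := by
      intro μ hμ
      obtain ⟨lamμ, hlamμ, hPμ⟩ := exists_roots (f μ) (hmaps hμ)
      exact (costara hn0 hlamμ (q_prod hPμ) habsω).1
    have hgd : DifferentiableOn ℂ (fun μ => Frat (f μ) ω) (ball 0 1) := by
      simp only [Frat]
      exact hFnumD.div hFdenD hdenne
    have hgm : MapsTo (fun μ => Frat (f μ) ω) (ball 0 1) (ball 0 1) := by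
      intro μ hμ
      obtain ⟨lamμ, hlamμ, hPμ⟩ := exists_roots (f μ) (hmaps hμ)
      have := (costara hn0 hlamμ (q_prod hPμ) habsω).2
      simpa [mem_ball, dist_eq_norm] using this
    have hg1 : (fun μ => Frat (f μ) ω) ζ₁ = 0 := by
      simp only []
      rw [hf1]
      simp [Frat, Fnum]
    have hsp := schwarz_pick hgd hgm hζ₁ hζ₂ hg1
    beta_reduce at hsp
    rw [hf2] at hsp
    exact hsp
  -- root data for s
  obtain ⟨lam, hlam, hPs⟩ := exists_roots s hs
  -- each root satisfies |w|^n ≤ m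
  have hrootpow : ∀ i, (‖lam i‖)^n ≤ m := by
    intro i
    set w := lam i with hwdef
    have hw : ‖w‖ < 1 := hlam i
    set Φ : ℂ → ℂ := fun μ => (-1:ℂ)^n * Pval (f μ) w / Qval (f μ) ((starRingEnd ℂ) w) with hΦ
    have hQne : ∀ μ ∈ ball (0:ℂ) 1, Qval (f μ) ((starRingEnd ℂ) w) ≠ 0 := by
      intro μ hμ
      obtain ⟨lamμ, hlamμ, hPμ⟩ := exists_roots (f μ) (hmaps hμ)
      rw [q_prod hPμ]
      apply Finset.prod_ne_zero_iff.mpr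
      intro k _ hzero
      have hbl := blaschke_lt (hlamμ k) hw
      rw [hzero] at hbl
      simp only [norm_zero] at hbl
      exact (norm_nonneg _).not_gt hbl
    have hPD : DifferentiableOn ℂ (fun μ => (-1:ℂ)^n * Pval (f μ) w) (ball 0 1) := by
      simp only [Pval]
      apply DifferentiableOn.const_mul
      apply DifferentiableOn.add (differentiableOn_const _)
      apply DifferentiableOn.fun_sum
      intro j _
      exact ((hfj j).const_mul _).mul_const _
    have hQD : DifferentiableOn ℂ (fun μ => Qval (f μ) ((starRingEnd ℂ) w)) (ball 0 1) := by
      simp only [Qval]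
      apply DifferentiableOn.add (differentiableOn_const _)
      apply DifferentiableOn.fun_sum
      intro j _
      exact ((hfj j).const_mul _).mul_const _
    have hΦd : DifferentiableOn ℂ Φ (ball 0 1) := by
      rw [hΦ]
      exact hPD.div hQD hQne
    have hΦm : MapsTo Φ (ball 0 1) (ball 0 1) := by
      intro μ hμ
      obtain ⟨lamμ, hlamμ, hPμ⟩ := exists_roots (f μ) (hmaps hμ)
      have hnum : ‖(-1:ℂ)^n * Pval (f μ) w‖
          = ∏ k, ‖w - lamμ k‖ := by
        rw [norm_mul, norm_pow, hPμ w, norm_prod]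
        simp
      have hdenv : ‖Qval (f μ) ((starRingEnd ℂ) w)‖
          = ∏ k, ‖1 - lamμ k * (starRingEnd ℂ) w‖ := by
        rw [q_prod hPμ, norm_prod]
      have hblk : ∀ k, ‖w - lamμ k‖
          < ‖1 - lamμ k * (starRingEnd ℂ) w‖ := fun k => blaschke_lt (hlamμ k) hw
      have hdenpos : 0 < ∏ k, ‖1 - lamμ k * (starRingEnd ℂ) w‖ :=
        Finset.prod_pos (fun k _ => lt_of_le_of_lt (norm_nonneg _) (hblk k))
      have hprod : ∏ k, ‖w - lamμ k‖
          < ∏ k, ‖1 - lamμ k * (starRingEnd ℂ) w‖ :=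
        prod_abs_lt hn0 (fun k => norm_nonneg _) hblk
      have : ‖Φ μ‖ < 1 := by
        rw [hΦ]
        simp only []
        rw [norm_div, hnum, hdenv, div_lt_one hdenpos]
        exact hprod
      simpa [mem_ball, dist_eq_norm] using this
    have hΦ2 : Φ ζ₂ = 0 := by
      rw [hΦ]
      simp only []
      rw [hf2]
      have hz : Pval s w = 0 := by
        rw [hPs w]
        exact Finset.prod_eq_zero (Finset.mem_univ i) (by simp [hwdef])
      rw [hz, mul_zero, zero_div]
    have hΦ1 : ‖Φ ζ₁‖ = (‖w‖)^n := by
      rw [hΦ]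
      simp only []
      rw [hf1]
      have h1 : Pval (0 : Fin n → ℂ) w = w^n := by simp [Pval]
      have h2 : Qval (0 : Fin n → ℂ) ((starRingEnd ℂ) w) = 1 := by simp [Qval]
      rw [h1, h2, div_one, norm_mul, norm_pow, norm_pow]
      simp
    have hsp := schwarz_pick hΦd hΦm hζ₂ hζ₁ hΦ2
    have hsym : ‖(ζ₁ - ζ₂) / (1 - (starRingEnd ℂ) ζ₂ * ζ₁)‖ = m := by
      rw [hm, norm_div, norm_div]
      congr 1
      · exact norm_sub_rev ζ₁ ζ₂
      · rw [← Complex.norm_conj (1 - (starRingEnd ℂ) ζ₂ * ζ₁)]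
        congr 1
        simp only [map_sub, map_mul, map_one, Complex.conj_conj]
        ring
    rw [hΦ1, hsym] at hsp
    exact hsp
  -- PART 1 : the inf term
  have part1 : sInf {x : ℝ | ∃ t : ℝ, 0 < t ∧
      (1 / t) * sSup ((fun z : ℂ => ‖Frat s z‖) '' Metric.sphere (0 : ℂ) (1 / t))
        < 1 ∧ x = t ^ n} ≤ m := by
    have hSbdd : BddBelow {x : ℝ | ∃ t : ℝ, 0 < t ∧
        (1 / t) * sSup ((fun z : ℂ => ‖Frat s z‖) '' Metric.sphere (0 : ℂ) (1 / t))
          < 1 ∧ x = t ^ n} := by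
      refine ⟨0, ?_⟩
      rintro x ⟨t, ht, _, rfl⟩
      positivity
    apply le_of_forall_gt_imp_ge_of_dense
    intro c hc
    have hc0 : 0 < c := lt_of_le_of_lt hm0 hc
    set t := c ^ ((n:ℝ))⁻¹ with htdef
    have ht0 : 0 < t := Real.rpow_pos_of_pos hc0 _
    have htn : t ^ n = c := Real.rpow_inv_natCast_pow hc0.le hn0.ne'
    have hroott : ∀ i, ‖lam i‖ < t := by
      intro i
      apply lt_of_pow_lt_pow_left₀ n ht0.le
      calc (‖lam i‖)^n ≤ m := hrootpow i
        _ < c := hc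
        _ = t ^ n := htn.symm
    have htc : (t:ℂ) ≠ 0 := by
      simp only [ne_eq, Complex.ofReal_eq_zero]
      exact ht0.ne'
    set σt : Fin n → ℂ := fun j => s j / (t:ℂ) ^ ((j:ℕ)+1) with hσt
    set lamt : Fin n → ℂ := fun i => lam i / (t:ℂ) with hlamtdef
    have hlamt : ∀ i, ‖lamt i‖ < 1 := by
      intro i
      rw [hlamtdef]
      simp only []
      rw [norm_div, Complex.norm_real, Real.norm_eq_abs, abs_of_pos ht0, div_lt_one ht0]
      exact hroott i
    have hPt : ∀ y : ℂ, Pval σt y = ∏ i, (y - lamt i) := by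
      intro y
      have h1 : ∀ i : Fin n, y - lamt i = (t:ℂ)⁻¹ * ((t:ℂ) * y - lam i) := by
        intro i
        rw [hlamtdef]
        simp only []
        field_simp
      rw [Finset.prod_congr rfl (fun i _ => h1 i), Finset.prod_mul_distrib, Finset.prod_const,
        Finset.card_univ, Fintype.card_fin, ← hPs ((t:ℂ) * y)]
      rw [Pval, Pval, mul_add, Finset.mul_sum]
      congr 1
      · rw [mul_pow, ← mul_assoc, ← mul_pow, inv_mul_cancel₀ htc, one_pow, one_mul]
      · apply Finset.sum_congr rfl
        intro j _
        have hj : (j:ℕ)+1 ≤ n := j.2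
        have h3 : ((t:ℂ)⁻¹)^n = ((t:ℂ)⁻¹)^((j:ℕ)+1) * ((t:ℂ)⁻¹)^(n - ((j:ℕ)+1)) := by
          rw [← pow_add, Nat.add_sub_cancel' hj]
        have h4 : ((t:ℂ)⁻¹)^(n-((j:ℕ)+1)) * (t:ℂ)^(n-((j:ℕ)+1)) = 1 := by
          rw [← mul_pow, inv_mul_cancel₀ htc, one_pow]
        rw [hσt]
        simp only []
        rw [mul_pow, h3, div_eq_mul_inv, ← inv_pow]
        linear_combination (-((-1:ℂ)^((j:ℕ)+1)) * s j * y^(n-((j:ℕ)+1))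
          * ((t:ℂ)⁻¹)^((j:ℕ)+1)) * h4
    have hqt := q_prod hPt
    have hstep : ∀ w : ℂ, ‖w‖ = 1/t →
        ‖Frat s w‖ < t ∧ Fden s w ≠ 0 := by
      intro w hwabs
      have h1 : ‖(t:ℂ) * w‖ = 1 := by
        rw [norm_mul, Complex.norm_real, Real.norm_eq_abs, abs_of_pos ht0, hwabs]
        field_simp
      obtain ⟨hdennz, hlt⟩ := costara hn0 hlamt hqt h1
      have hsc := frat_scale s htc ((t:ℂ) * w)
      have hww : (t:ℂ) * w * (t:ℂ)⁻¹ = w := by field_simp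
      rw [hww] at hsc
      have hσteq : σt = fun j => s j / (t:ℂ) ^ ((j:ℕ)+1) := hσt
      rw [← hσteq] at hsc
      constructor
      · have h2 : ‖Frat σt ((t:ℂ)*w)‖ < 1 := hlt
        rw [hsc, norm_mul, norm_inv, Complex.norm_real, Real.norm_eq_abs, abs_of_pos ht0] at h2
        calc ‖Frat s w‖ = t * (t⁻¹ * ‖Frat s w‖) := by field_simp
          _ < t * 1 := by exact mul_lt_mul_of_pos_left h2 ht0
          _ = t := mul_one t
      · have hds := fden_scale s htc ((t:ℂ)*w)
        rw [hww, ← hσteq] at hds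
        rw [← hds]
        exact hdennz
    have hAcond : (1/t) * sSup ((fun z : ℂ => ‖Frat s z‖)
        '' Metric.sphere (0:ℂ) (1/t)) < 1 := by
      have hne : ((fun z : ℂ => ‖Frat s z‖) '' Metric.sphere (0:ℂ) (1/t)).Nonempty := by
        apply Set.Nonempty.image
        exact NormedSpace.sphere_nonempty.mpr (by positivity)
      have hcFnum : Continuous (fun z : ℂ => Fnum s z) := by
        simp only [Fnum]
        exact continuous_finset_sum _ (fun j _ => continuous_const.mul (continuous_pow _))
      have hcFden : Continuous (fun z : ℂ => Fden s z) := by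
        simp only [Fden]
        exact continuous_const.add
          (continuous_finset_sum _ (fun j _ => continuous_const.mul (continuous_pow _)))
      have hcont0 : ContinuousOn (fun z : ℂ => Frat s z)
          (Metric.sphere (0:ℂ) (1/t)) := by
        simp only [Frat]
        apply ContinuousOn.div hcFnum.continuousOn hcFden.continuousOn
        intro w hw
        exact (hstep w (by simpa using mem_sphere_zero_iff_norm.mp hw)).2
      have hcont : ContinuousOn (fun z : ℂ => ‖Frat s z‖)
          (Metric.sphere (0:ℂ) (1/t)) := continuous_norm.comp_continuousOn hcont0
      have hcomp : IsCompact ((fun z : ℂ => ‖Frat s z‖)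
          '' Metric.sphere (0:ℂ) (1/t)) :=
        (isCompact_sphere (0:ℂ) (1/t)).image_of_continuousOn hcont
      obtain ⟨w₀, hw₀, heq⟩ := hcomp.sSup_mem hne
      have hlt := (hstep w₀ (by simpa using mem_sphere_zero_iff_norm.mp hw₀)).1
      calc (1/t) * sSup ((fun z : ℂ => ‖Frat s z‖) '' Metric.sphere (0:ℂ) (1/t))
          = (1/t) * ‖Frat s w₀‖ := by rw [← heq]
        _ < (1/t) * t := mul_lt_mul_of_pos_left hlt (by positivity)
        _ = 1 := by field_simp
    exact csInf_le hSbdd ⟨t, ht0, hAcond, htn.symm⟩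
  exact max_le part1 part2
end

section
/- For every W in the spectral unit ball Ω_n, the Lempert function of Ω_n satisfies ℓ_{Ω_n}(0, W) = tanh⁻¹(r(W)), where r(W) is the spectral radius of W. -/
open Set Metric

/-- The spectral radius of a complex `n × n` matrix: the maximum modulus of its eigenvalues. -/
noncomputable def specRad {n : ℕ} (W : Matrix (Fin n) (Fin n) ℂ) : ℝ :=
  sSup ((fun z : ℂ => ‖z‖) '' spectrum ℂ W)

/-- The spectral unit ball `Ωₙ = {W ∈ Mₙ(ℂ) : r(W) < 1}`. -/
noncomputable def spectralUnitBall (n : ℕ) : Set (Matrix (Fin n) (Fin n) ℂ) :=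
  {W | specRad W < 1}

attribute [local instance] Matrix.normedAddCommGroup Matrix.normedSpace

/-- The inverse hyperbolic tangent, `tanh⁻¹ x = (1/2) log((1+x)/(1−x))`. -/
noncomputable def artanh (x : ℝ) : ℝ :=
  Real.log ((1 + x) / (1 - x)) / 2

/-- The Lempert function: `ℓ_Ω(z₁,z₂) = inf{p_D(0,ζ) : ζ ∈ D, ∃ φ ∈ 𝒪(D;Ω), φ(0)=z₁, φ(ζ)=z₂}`,
where `p_D(0,ζ) = tanh⁻¹(|ζ|)` is the Poincaré distance. -/
noncomputable def lempert {E : Type*} [NormedAddCommGroup E] [NormedSpace ℂ E]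
    (Ω : Set E) (z₁ z₂ : E) : ℝ :=
  sInf {p : ℝ | ∃ ζ : ℂ, ‖ζ‖ < 1 ∧ p = artanh ‖ζ‖ ∧
    ∃ φ : ℂ → E, DifferentiableOn ℂ φ (Metric.ball 0 1) ∧
      Set.MapsTo φ (Metric.ball 0 1) Ω ∧ φ 0 = z₁ ∧ φ ζ = z₂}

open scoped Pointwise

section aux
variable {n : ℕ}

noncomputable def matCLM (n : ℕ) :
    Matrix (Fin n) (Fin n) ℂ →L[ℂ] (EuclideanSpace ℂ (Fin n) →L[ℂ] EuclideanSpace ℂ (Fin n)) :=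
  LinearMap.toContinuousLinearMap
    { toFun := fun M => Matrix.toEuclideanCLM (𝕜 := ℂ) M
      map_add' := fun a b => map_add _ a b
      map_smul' := fun c a => map_smul _ c a }

lemma matCLM_apply (M : Matrix (Fin n) (Fin n) ℂ) :
    matCLM n M = Matrix.toEuclideanCLM (𝕜 := ℂ) M := rfl

lemma spectrum_matCLM (M : Matrix (Fin n) (Fin n) ℂ) :
    spectrum ℂ (matCLM n M) = spectrum ℂ M := by
  rw [matCLM_apply]
  exact AlgEquiv.spectrum_eq (Matrix.toEuclideanCLM (𝕜 := ℂ)) M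

lemma spectrum_nonempty (hn : 0 < n) (M : Matrix (Fin n) (Fin n) ℂ) :
    (spectrum ℂ M).Nonempty := by
  haveI : Nonempty (Fin n) := ⟨⟨0, hn⟩⟩
  have := spectrum.nonempty (matCLM n M)
  rwa [spectrum_matCLM] at this

lemma bddAbove_abs_spectrum (M : Matrix (Fin n) (Fin n) ℂ) :
    BddAbove ((fun z : ℂ => ‖z‖) '' spectrum ℂ M) := by
  rw [← spectrum_matCLM]
  exact ((spectrum.isCompact (matCLM n M)).image continuous_norm).bddAbove

lemma abs_le_specRad {M : Matrix (Fin n) (Fin n) ℂ} {μ : ℂ} (hμ : μ ∈ spectrum ℂ M) :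
    ‖μ‖ ≤ specRad M :=
  le_csSup (bddAbove_abs_spectrum M) ⟨μ, hμ, rfl⟩

lemma specRad_le (hn : 0 < n) {M : Matrix (Fin n) (Fin n) ℂ} {x : ℝ}
    (h : ∀ μ ∈ spectrum ℂ M, ‖μ‖ ≤ x) : specRad M ≤ x :=
  csSup_le ((spectrum_nonempty hn M).image _) (by rintro _ ⟨μ, hμ, rfl⟩; exact h μ hμ)

lemma specRad_nonneg (hn : 0 < n) (M : Matrix (Fin n) (Fin n) ℂ) : 0 ≤ specRad M := by
  obtain ⟨μ, hμ⟩ := spectrum_nonempty hn M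
  exact le_trans (norm_nonneg μ) (abs_le_specRad hμ)

lemma specRad_smul_le (hn : 0 < n) (c : ℂ) (M : Matrix (Fin n) (Fin n) ℂ) :
    specRad (c • M) ≤ ‖c‖ * specRad M := by
  rcases eq_or_ne c 0 with rfl | hc
  · simp only [zero_smul, norm_zero, zero_mul]
    apply specRad_le hn
    intro μ hμ
    haveI : Nonempty (Fin n) := ⟨⟨0, hn⟩⟩
    rw [spectrum.zero_eq] at hμ
    simp [Set.mem_singleton_iff.mp hμ]
  · apply specRad_le hn
    intro μ hμ
    have hsp : spectrum ℂ (c • M) = (Units.mk0 c hc) • spectrum ℂ M := by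
      simpa [Units.smul_def] using spectrum.unit_smul_eq_smul M (Units.mk0 c hc)
    rw [hsp] at hμ
    obtain ⟨ν, hν, rfl⟩ := hμ
    simp only [Units.smul_def, Units.val_mk0, smul_eq_mul, norm_mul]
    exact mul_le_mul_of_nonneg_left (abs_le_specRad hν) (norm_nonneg c)

end aux

section aux2
open scoped ENNReal
variable {n : ℕ}

lemma specRad_le_norm_pow (hn : 0 < n) (M : Matrix (Fin n) (Fin n) ℂ) (N : ℕ) (hN : 0 < N)
    (C : ℝ) (hC : 0 ≤ C) (h : ‖(matCLM n M) ^ N‖ ≤ C ^ N) : specRad M ≤ C := by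
  haveI : Nonempty (Fin n) := ⟨⟨0, hn⟩⟩
  apply specRad_le hn
  intro μ hμ
  rw [← spectrum_matCLM] at hμ
  have hμN : μ ^ N ∈ spectrum ℂ ((matCLM n M) ^ N) := by
    rw [spectrum.map_pow_of_pos _ hN]
    exact ⟨μ, hμ, rfl⟩
  have h1 : ‖μ ^ N‖ ≤ ‖(matCLM n M) ^ N‖ := spectrum.norm_le_norm_of_mem hμN
  have h2 : ‖μ‖ ^ N ≤ C ^ N := by
    rw [← norm_pow]
    exact h1.trans h
  exact (pow_le_pow_iff_left₀ (norm_nonneg μ) hC hN.ne').mp h2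

lemma spectralRadius_matCLM_lt (hn : 0 < n) (M : Matrix (Fin n) (Fin n) ℂ) {x : ℝ}
    (hx : 0 < x) (h : specRad M < x) :
    spectralRadius ℂ (matCLM n M) < ENNReal.ofReal x := by
  have hle : spectralRadius ℂ (matCLM n M) ≤ ENNReal.ofReal (specRad M) := by
    rw [spectralRadius]
    refine iSup₂_le fun μ hμ => ?_
    rw [spectrum_matCLM] at hμ
    rw [← enorm_eq_nnnorm, ← ofReal_norm]
    exact ENNReal.ofReal_le_ofReal (abs_le_specRad hμ)
  exact lt_of_le_of_lt hle (by
    rw [ENNReal.ofReal_lt_ofReal_iff hx]; exact h)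

lemma exists_pow_norm_lt {E : Type*} [NormedAddCommGroup E] [NormedSpace ℂ E] [CompleteSpace E]
    (a : E →L[ℂ] E) {c : ℝ} (hc : 0 < c)
    (h : spectralRadius ℂ a < ENNReal.ofReal c) : ∃ N : ℕ, 0 < N ∧ ‖a ^ N‖ < c ^ N := by
  have hG := spectrum.pow_nnnorm_pow_one_div_tendsto_nhds_spectralRadius a
  have hev := (hG.eventually_lt_const h).and (Filter.eventually_gt_atTop 0)
  obtain ⟨N, hlt, hN⟩ := hev.exists
  refine ⟨N, hN, ?_⟩
  have hNne : (N : ℝ) ≠ 0 := Nat.cast_ne_zero.mpr hN.ne'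
  have h1 : ((‖a ^ N‖₊ : ℝ≥0∞) ^ (1 / (N : ℝ))) ^ (N : ℝ) < (ENNReal.ofReal c) ^ (N : ℝ) :=
    ENNReal.rpow_lt_rpow hlt (by positivity)
  rw [← ENNReal.rpow_mul, one_div, inv_mul_cancel₀ hNne, ENNReal.rpow_one,
    ENNReal.ofReal_rpow_of_pos hc, Real.rpow_natCast, ← enorm_eq_nnnorm, ← ofReal_norm] at h1
  rwa [ENNReal.ofReal_lt_ofReal_iff_of_nonneg (norm_nonneg _)] at h1

end aux2

section key
variable {n : ℕ}

lemma specRad_apply_le (hn0 : 0 < n) {φ : ℂ → Matrix (Fin n) (Fin n) ℂ} {ζ : ℂ}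
    (hζ : ‖ζ‖ < 1)
    (hd : DifferentiableOn ℂ φ (ball 0 1))
    (hm : MapsTo φ (ball 0 1) {W | specRad W < 1})
    (h0 : φ 0 = 0) :
    specRad (φ ζ) ≤ ‖ζ‖ := by
  haveI : Nonempty (Fin n) := ⟨⟨0, hn0⟩⟩
  have hζball : ζ ∈ ball (0:ℂ) 1 := by rwa [mem_ball_zero_iff]
  rcases eq_or_ne ζ 0 with rfl | hζ0
  · rw [h0, norm_zero]
    apply specRad_le hn0
    intro μ hμ
    rw [spectrum.zero_eq] at hμ
    simp [Set.mem_singleton_iff.mp hμ]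
  have habs0 : 0 < ‖ζ‖ := norm_pos_iff.mpr hζ0
  set ψ := dslope φ 0 with hψ
  have hψd : DifferentiableOn ℂ ψ (ball 0 1) :=
    (Complex.differentiableOn_dslope (ball_mem_nhds 0 one_pos)).mpr hd
  have hfact : ∀ z : ℂ, z ≠ 0 → φ z = z • ψ z := by
    intro z hz
    rw [hψ, dslope_of_ne _ hz, slope_def_module, h0, sub_zero, sub_zero, smul_smul,
      mul_inv_cancel₀ hz, one_smul]
  have claim : ∀ s : ℝ, ‖ζ‖ < s → s < 1 → specRad (ψ ζ) ≤ 1 / s := by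
    intro s hs1 hs2
    have hs0 : 0 < s := lt_trans habs0 hs1
    set g : ℂ → (EuclideanSpace ℂ (Fin n) →L[ℂ] EuclideanSpace ℂ (Fin n)) :=
      fun z => matCLM n (ψ z) with hg
    have hgd : DifferentiableOn ℂ g (ball 0 1) :=
      (matCLM n).differentiable.comp_differentiableOn hψd
    have hsph : ∀ w ∈ sphere (0:ℂ) s, spectralRadius ℂ (g w) < ENNReal.ofReal (1/s) := by
      intro w hw
      have hws : ‖w‖ = s := by rwa [mem_sphere_zero_iff_norm] at hw
      have hw1 : w ∈ ball (0:ℂ) 1 := by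
        rw [mem_ball_zero_iff, hws]; exact hs2
      have hwne : w ≠ 0 := fun h => by rw [h, norm_zero] at hws; exact hs0.ne hws
      have hφw : specRad (φ w) < 1 := hm hw1
      have hψw : specRad (ψ w) < 1/s := by
        have hrep : ψ w = w⁻¹ • φ w := by
          rw [hfact w hwne, smul_smul, inv_mul_cancel₀ hwne, one_smul]
        calc specRad (ψ w) ≤ ‖w⁻¹‖ * specRad (φ w) := by
              rw [hrep]; exact specRad_smul_le hn0 _ _
          _ = (1/s) * specRad (φ w) := by rw [norm_inv, hws, one_div]
          _ < (1/s) * 1 := by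
              exact mul_lt_mul_of_pos_left hφw (by positivity)
          _ = 1/s := mul_one _
      exact spectralRadius_matCLM_lt hn0 _ (by positivity) hψw
    set V : ℕ → Set ℂ := fun i =>
      ball 0 1 ∩ (fun w => ‖(g w) ^ (i+1)‖) ⁻¹' Iio ((1/s) ^ (i+1)) with hV
    have hVo : ∀ i, IsOpen (V i) := by
      intro i
      exact ContinuousOn.isOpen_inter_preimage
        (((hgd.pow (i+1)).continuousOn).norm) isOpen_ball isOpen_Iio
    have hcover : sphere (0:ℂ) s ⊆ ⋃ i, V i := by
      intro w hw
      obtain ⟨N, hN, hNlt⟩ := exists_pow_norm_lt (g w) (by positivity) (hsph w hw)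
      have hw1 : w ∈ ball (0:ℂ) 1 := by
        rw [mem_sphere_zero_iff_norm] at hw
        rw [mem_ball_zero_iff, hw]; exact hs2
      refine Set.mem_iUnion.mpr ⟨N - 1, hw1, ?_⟩
      have : N - 1 + 1 = N := Nat.succ_pred_eq_of_pos hN
      rw [Set.mem_preimage, this]
      exact hNlt
    obtain ⟨t, ht⟩ := (isCompact_sphere (0:ℂ) s).elim_finite_subcover V hVo hcover
    set P := ∏ i ∈ t, (i+1) with hP
    have hPpos : 0 < P := Finset.prod_pos (fun i _ => Nat.succ_pos i)
    have hb : ∀ w ∈ sphere (0:ℂ) s, ‖(g w) ^ P‖ ≤ (1/s) ^ P := by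
      intro w hw
      obtain ⟨i, hit, hwV⟩ : ∃ i ∈ t, w ∈ V i := by
        have := ht hw
        simpa using this
      obtain ⟨m, hm'⟩ : (i+1) ∣ P := Finset.dvd_prod_of_mem _ hit
      have hmpos : 0 < m := by
        rcases Nat.eq_zero_or_pos m with rfl | h
        · rw [mul_zero] at hm'; exact absurd hm' hPpos.ne'
        · exact h
      calc ‖(g w) ^ P‖ = ‖((g w) ^ (i+1)) ^ m‖ := by rw [← pow_mul, ← hm']
        _ ≤ ‖(g w) ^ (i+1)‖ ^ m := norm_pow_le' _ hmpos
        _ ≤ ((1/s) ^ (i+1)) ^ m := pow_le_pow_left₀ (norm_nonneg _) (le_of_lt hwV.2) m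
        _ = (1/s) ^ P := by rw [← pow_mul, ← hm']
    have hF : DiffContOnCl ℂ (fun z => (g z) ^ P) (ball 0 s) := by
      refine ⟨(hgd.pow P).mono (ball_subset_ball hs2.le), ?_⟩
      rw [closure_ball (0:ℂ) hs0.ne']
      exact ((hgd.pow P).continuousOn).mono (closedBall_subset_ball hs2)
    have hmax : ‖(g ζ) ^ P‖ ≤ (1/s) ^ P := by
      refine Complex.norm_le_of_forall_mem_frontier_norm_le isBounded_ball hF ?_ ?_
      · intro w hw
        rw [frontier_ball (0:ℂ) hs0.ne'] at hw
        exact hb w hw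
      · rw [closure_ball (0:ℂ) hs0.ne', mem_closedBall_zero_iff]
        exact hs1.le
    exact specRad_le_norm_pow hn0 _ P hPpos _ (by positivity) hmax
  by_contra hcon
  push_neg at hcon
  set R := specRad (φ ζ) with hR
  have hR1 : R < 1 := hm hζball
  have hR0 : 0 < R := lt_trans habs0 hcon
  set d := ‖ζ‖ / R with hd'
  have hd1 : d < 1 := (div_lt_one hR0).mpr hcon
  have hdζ : ‖ζ‖ < d := by
    rw [hd', lt_div_iff₀ hR0]
    nlinarith
  set s := (d + 1) / 2 with hs'
  have hds : d < s := by rw [hs']; linarith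
  have hs1 : ‖ζ‖ < s := lt_trans hdζ hds
  have hs2 : s < 1 := by rw [hs']; linarith
  have hs0 : 0 < s := lt_trans habs0 hs1
  have hkey : specRad (ψ ζ) ≤ 1 / s := claim s hs1 hs2
  have hRle : R ≤ ‖ζ‖ * (1 / s) := by
    calc R = specRad (ζ • ψ ζ) := by rw [hR, hfact ζ hζ0]
      _ ≤ ‖ζ‖ * specRad (ψ ζ) := specRad_smul_le hn0 _ _
      _ ≤ ‖ζ‖ * (1 / s) := by
          exact mul_le_mul_of_nonneg_left hkey habs0.le
  rw [mul_one_div] at hRle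
  have h1 : R * s ≤ ‖ζ‖ := (le_div_iff₀ hs0).mp hRle
  have h2 : ‖ζ‖ < R * s := by
    have : ‖ζ‖ = R * d := by rw [hd']; field_simp
    rw [this]
    exact mul_lt_mul_of_pos_left hds hR0
  linarith

end key

lemma artanh_le_artanh {x y : ℝ} (hx : 0 ≤ x) (hxy : x ≤ y) (hy : y < 1) :
    artanh x ≤ artanh y := by
  unfold artanh
  have hx1 : x < 1 := lt_of_le_of_lt hxy hy
  have h1 : (0:ℝ) < (1 + x) / (1 - x) := div_pos (by linarith) (by linarith)
  have h2 : (1 + x) / (1 - x) ≤ (1 + y) / (1 - y) := by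
    rw [div_le_div_iff₀ (by linarith) (by linarith)]
    nlinarith
  have := Real.log_le_log h1 h2
  linarith

lemma continuousAt_artanh {r : ℝ} (hr : 0 ≤ r) (hr1 : r < 1) : ContinuousAt artanh r := by
  unfold artanh
  have h1 : ContinuousAt (fun x : ℝ => (1 + x) / (1 - x)) r := by
    apply ContinuousAt.div
    · exact (continuous_const.add continuous_id).continuousAt
    · exact (continuous_const.sub continuous_id).continuousAt
    · show (1:ℝ) - r ≠ 0; intro h; linarith [sub_eq_zero.mp h]
  have hpos : (0:ℝ) < (1 + r) / (1 - r) := div_pos (by linarith) (by linarith)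
  exact ((h1.log hpos.ne').div_const 2)

theorem lempert_spectralUnitBall_eq_artanh_specRad (n : ℕ) (hn : 2 ≤ n)
    (W : Matrix (Fin n) (Fin n) ℂ) (hW : W ∈ spectralUnitBall n) :
    lempert (spectralUnitBall n) 0 W = artanh (specRad W) := by
  have hn0 : 0 < n := lt_of_lt_of_le two_pos hn
  set r := specRad W with hr
  have hr1 : r < 1 := hW
  have hr0 : 0 ≤ r := specRad_nonneg hn0 W
  set S : Set ℝ := {p : ℝ | ∃ ζ : ℂ, ‖ζ‖ < 1 ∧ p = artanh ‖ζ‖ ∧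
    ∃ φ : ℂ → Matrix (Fin n) (Fin n) ℂ, DifferentiableOn ℂ φ (Metric.ball 0 1) ∧
      Set.MapsTo φ (Metric.ball 0 1) (spectralUnitBall n) ∧ φ 0 = 0 ∧ φ ζ = W} with hS
  have hle : lempert (spectralUnitBall n) 0 W = sInf S := rfl
  have hlow : ∀ p ∈ S, artanh r ≤ p := by
    rintro p ⟨ζ, hζ1, rfl, φ, hφd, hφm, hφ0, hφζ⟩
    have hkey : specRad (φ ζ) ≤ ‖ζ‖ := specRad_apply_le hn0 hζ1 hφd hφm hφ0
    rw [hφζ] at hkey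
    exact artanh_le_artanh hr0 hkey hζ1
  have hmemS : ∀ t : ℝ, r < t → t < 1 → artanh t ∈ S := by
    intro t h1 h2
    have ht0 : 0 < t := lt_of_le_of_lt hr0 h1
    have habs : ‖(t : ℂ)‖ = t := by
      rw [Complex.norm_of_nonneg ht0.le]
    have htne : (t : ℂ) ≠ 0 := Complex.ofReal_ne_zero.mpr ht0.ne'
    refine ⟨(t : ℂ), by rw [habs]; exact h2, by rw [habs], fun z => (z / (t:ℂ)) • W,
      ?_, ?_, ?_, ?_⟩
    · exact ((differentiable_id.div_const _).smul_const W).differentiableOn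
    · intro z hz
      rw [mem_ball_zero_iff] at hz
      show specRad ((z / (t:ℂ)) • W) < 1
      calc specRad ((z / (t:ℂ)) • W) ≤ ‖z / (t:ℂ)‖ * r := specRad_smul_le hn0 _ _
        _ = ‖z‖ * r / t := by rw [norm_div, habs, div_mul_eq_mul_div]
        _ < 1 := by
            rw [div_lt_one ht0]
            calc ‖z‖ * r ≤ 1 * r := by
                  exact mul_le_mul_of_nonneg_right hz.le hr0
              _ = r := one_mul r
              _ < t := h1
    · show ((0:ℂ) / (t:ℂ)) • W = 0
      rw [zero_div, zero_smul]
    · show (((t:ℂ)) / (t:ℂ)) • W = W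
      rw [div_self htne, one_smul]
  have hSne : S.Nonempty := ⟨artanh ((r + 1) / 2), hmemS _ (by linarith) (by linarith)⟩
  have hbdd : BddBelow S := ⟨artanh r, hlow⟩
  refine le_antisymm ?_ (hle ▸ le_csInf hSne hlow)
  rw [hle]
  have htend : Filter.Tendsto artanh (nhdsWithin r (Set.Ioi r)) (nhds (artanh r)) :=
    ((continuousAt_artanh hr0 hr1).tendsto).mono_left nhdsWithin_le_nhds
  refine ge_of_tendsto htend ?_
  filter_upwards [Ioo_mem_nhdsGT_of_mem (Set.mem_Ico.mpr ⟨le_refl r, hr1⟩)] with t ht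
  exact csInf_le hbdd (hmemS t ht.1 ht.2)
end
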